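/- arXiv:2402.16000 — 3 statements merged into one kernel-verified Lean document; each statement's English description precedes it below -/
import Mathlib

section
/- Let Z ∈ ℝ^{M×k} with k ≤ M be a matrix all of whose columns have Euclidean norm 1. Then log det(I + Z Zᵀ) = k log 2 if and only if the columns of Z are orthonormal. -/
open Matrix

/-- If `Z ∈ ℝ^{M×k}` with `k ≤ M` has columns of unit Euclidean norm, then
`log det(I + Z Zᵀ) = k log 2` if and only if the columns of `Z` are orthonormal
(i.e. `Zᵀ Z = I`). -/
theorem logdet_eq_iff_orthonormal_columns (M k : ℕ) (hk : k ≤ M)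
    (Z : Matrix (Fin M) (Fin k) ℝ) (hcols : ∀ j, ∑ i, (Z i j) ^ 2 = 1) :
    Real.log ((1 + Z * Zᵀ).det) = (k : ℝ) * Real.log 2 ↔ Zᵀ * Z = 1 := by
  classical
  set A : Matrix (Fin k) (Fin k) ℝ := Zᵀ * Z with hAdef
  have hsyl : (1 + Z * Zᵀ).det = (1 + A).det := Matrix.det_one_add_mul_comm Z Zᵀ
  have hPSD : A.PosSemidef := by
    have := Matrix.posSemidef_conjTranspose_mul_self Z
    simpa [Matrix.conjTranspose_eq_transpose_of_trivial, hAdef] using this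
  have hA : A.IsHermitian := hPSD.1
  set U : Matrix (Fin k) (Fin k) ℝ := (Matrix.IsHermitian.eigenvectorUnitary hA : Matrix (Fin k) (Fin k) ℝ) with hUdef
  have hU2 : U * star U = 1 :=
    (Matrix.mem_unitaryGroup_iff).mp (Matrix.IsHermitian.eigenvectorUnitary hA).2
  set lam : Fin k → ℝ := hA.eigenvalues with hlam
  have hlnn : ∀ i, 0 ≤ lam i := fun i => hPSD.eigenvalues_nonneg i
  -- spectral theorem
  have hspec : A = U * Matrix.diagonal (RCLike.ofReal ∘ lam) * star U := hA.spectral_theorem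
  have h1 : U * (1 + Matrix.diagonal (RCLike.ofReal ∘ lam)) * star U = 1 + A := by
    rw [mul_add, mul_one, add_mul, hU2, ← hspec]
  -- determinant as product of (1 + eigenvalues)
  have hdiag : ((1 : Matrix (Fin k) (Fin k) ℝ) + Matrix.diagonal (RCLike.ofReal ∘ lam))
      = Matrix.diagonal (fun i => 1 + lam i) := by
    rw [← Matrix.diagonal_one, Matrix.diagonal_add]
    congr 1
  have hdet : (1 + A).det = ∏ i, (1 + lam i) := by
    rw [← h1, Matrix.det_mul_right_comm, hU2, one_mul, hdiag, Matrix.det_diagonal]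
  -- trace is sum of eigenvalues
  have htr1 : A.trace = ∑ i, lam i := by
    conv_lhs => rw [hspec]
    rw [Matrix.trace_mul_cycle]
    have hU1 : star U * U = 1 := (Matrix.mem_unitaryGroup_iff').mp
      (Matrix.IsHermitian.eigenvectorUnitary hA).2
    rw [hU1, one_mul, Matrix.trace_diagonal]
    simp
  -- trace equals k
  have htr2 : A.trace = (k : ℝ) := by
    rw [Matrix.trace]
    have : ∀ j, A.diag j = 1 := by
      intro j
      simp only [Matrix.diag_apply, hAdef, Matrix.mul_apply, Matrix.transpose_apply]
      rw [← hcols j]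
      exact Finset.sum_congr rfl fun i _ => (sq (Z i j)).symm
    rw [Finset.sum_congr rfl fun j _ => this j]
    simp
  have hsum : ∑ i, lam i = (k : ℝ) := by rw [← htr1, htr2]
  have hpos : ∀ i : Fin k, (0:ℝ) < 1 + lam i := fun i => by linarith [hlnn i]
  constructor
  · intro hlog
    rw [hsyl, hdet] at hlog
    rw [Real.log_prod (fun i _ => (hpos i).ne')] at hlog
    -- define the slack function
    set f : Fin k → ℝ := fun i => Real.log 2 + (lam i - 1) / 2 - Real.log (1 + lam i) with hf
    have hfnn : ∀ i, 0 ≤ f i := by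
      intro i
      have hx : (0:ℝ) < (1 + lam i) / 2 := by linarith [hpos i]
      have := Real.log_le_sub_one_of_pos hx
      rw [Real.log_div (hpos i).ne' two_ne_zero] at this
      simp only [hf]
      linarith
    have hfsum : ∑ i, f i = 0 := by
      have h2 : ∑ x : Fin k, (lam x - 1) / 2 = 0 := by
        rw [← Finset.sum_div, Finset.sum_sub_distrib, hsum]
        simp
      simp only [hf]
      rw [Finset.sum_sub_distrib, Finset.sum_add_distrib, hlog, h2, Finset.sum_const]
      simp [mul_comm]
    have hfzero : ∀ i ∈ Finset.univ, f i = 0 := by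
      rw [← Finset.sum_eq_zero_iff_of_nonneg (fun i _ => hfnn i)]
      exact hfsum
    have hlam1 : ∀ i, lam i = 1 := by
      intro i
      by_contra hne
      have hx : (0:ℝ) < (1 + lam i) / 2 := by linarith [hpos i]
      have hx1 : (1 + lam i) / 2 ≠ 1 := by
        intro h
        apply hne
        field_simp at h
        linarith
      have := Real.log_lt_sub_one_of_pos hx hx1
      rw [Real.log_div (hpos i).ne' two_ne_zero] at this
      have h0 := hfzero i (Finset.mem_univ i)
      simp only [hf] at h0
      linarith
    have heq : RCLike.ofReal ∘ lam = fun _ : Fin k => (1:ℝ) := funext fun i => by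
      simp [hlam1 i]
    have : Matrix.diagonal (RCLike.ofReal ∘ lam) = (1 : Matrix (Fin k) (Fin k) ℝ) := by
      rw [heq, Matrix.diagonal_one]
    rw [hspec, this, mul_one, hU2]
  · intro h
    rw [hsyl, show (1:Matrix (Fin k) (Fin k) ℝ) + A = 1 + 1 by rw [h]]
    have : (1 : Matrix (Fin k) (Fin k) ℝ) + 1 = Matrix.diagonal (fun _ => (2:ℝ)) := by
      rw [← Matrix.diagonal_one, Matrix.diagonal_add]
      congr 1
      funext i
      norm_num
    rw [this, Matrix.det_diagonal]
    simp [Real.log_pow]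
end

section
/- Let C, D be symmetric positive semidefinite n×n real matrices with C ⪯ D (i.e., D − C positive semidefinite). Then 0 ≤ log det(I + D) − log det(I + C) ≤ log det(I + D − C). -/
open Matrix

variable {m : ℕ}

open scoped MatrixOrder in
noncomputable def Matrix.PosSemidef.sqrt {A : Matrix (Fin m) (Fin m) ℝ} (_hA : A.PosSemidef) :
    Matrix (Fin m) (Fin m) ℝ := CFC.sqrt A

open scoped MatrixOrder in
lemma Matrix.PosSemidef.sqrt_mul_self {A : Matrix (Fin m) (Fin m) ℝ} (hA : A.PosSemidef) :
    hA.sqrt * hA.sqrt = A := CFC.sqrt_mul_sqrt_self A hA.nonneg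

open scoped MatrixOrder in
lemma Matrix.PosSemidef.posSemidef_sqrt {A : Matrix (Fin m) (Fin m) ℝ} (hA : A.PosSemidef) :
    hA.sqrt.PosSemidef := (CFC.sqrt_nonneg A).posSemidef

private lemma one_le_det_one_add {P : Matrix (Fin m) (Fin m) ℝ} (hP : P.PosSemidef) :
    1 ≤ (1 + P).det := by
  have hH := hP.isHermitian
  set U : Matrix (Fin m) (Fin m) ℝ := (hH.eigenvectorUnitary : Matrix (Fin m) (Fin m) ℝ) with hU
  have hUU : U * star U = 1 := (Matrix.mem_unitaryGroup_iff).mp hH.eigenvectorUnitary.2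
  have h1 : (1 + P) = U * (1 + diagonal (RCLike.ofReal ∘ hH.eigenvalues)) * star U := by
    rw [mul_add, add_mul, mul_one, hUU]
    exact congrArg (1 + ·) hH.spectral_theorem
  rw [h1, det_mul_right_comm, hUU, one_mul]
  have : (1 : Matrix (Fin m) (Fin m) ℝ) + diagonal (RCLike.ofReal ∘ hH.eigenvalues)
      = diagonal (fun i => 1 + hH.eigenvalues i) := by
    rw [← diagonal_one, diagonal_add]
    simp [Function.comp]
  rw [this, det_diagonal]
  calc (1:ℝ) = ∏ _i : Fin m, (1:ℝ) := by simp
    _ ≤ ∏ i, (1 + hH.eigenvalues i) :=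
      Finset.prod_le_prod (fun i _ => zero_le_one)
        (fun i _ => by linarith [hP.eigenvalues_nonneg i])

private lemma sandwich_psd {A : Matrix (Fin m) (Fin m) ℝ} (hA : A.PosSemidef)
    {T : Matrix (Fin m) (Fin m) ℝ} (hT : T.IsHermitian) : (T * A * T).PosSemidef := by
  have := hA.conjTranspose_mul_mul_same T
  rwa [hT] at this

private lemma det_add_eq {S E : Matrix (Fin m) (Fin m) ℝ} (hS : S.PosDef) (hE : E.PosSemidef) :
    (S + E).det = S.det * (1 + hE.sqrt * S⁻¹ * hE.sqrt).det := by
  have hSdet : IsUnit S.det := isUnit_iff_ne_zero.mpr hS.det_pos.ne'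
  have h1 : S + E = S * (1 + S⁻¹ * E) := by
    rw [mul_add, mul_one, ← mul_assoc, mul_nonsing_inv _ hSdet, one_mul]
  rw [h1, det_mul]
  congr 1
  conv_lhs => rw [← hE.sqrt_mul_self, ← mul_assoc]
  rw [det_one_add_mul_comm, ← mul_assoc]

private lemma one_sub_inv_psd {S : Matrix (Fin m) (Fin m) ℝ} (hS : S.PosDef)
    (h1 : (S - 1).PosSemidef) : ((1 : Matrix (Fin m) (Fin m) ℝ) - S⁻¹).PosSemidef := by
  have hSdet : IsUnit S.det := isUnit_iff_ne_zero.mpr hS.det_pos.ne'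
  set T := hS.inv.posSemidef.sqrt with hTdef
  have hT : T * T = S⁻¹ := hS.inv.posSemidef.sqrt_mul_self
  have hTdet : IsUnit T.det := by
    have h : T.det * T.det = S⁻¹.det := by rw [← det_mul, hT]
    refine isUnit_iff_ne_zero.mpr fun h0 => ?_
    rw [h0, mul_zero] at h
    exact hS.inv.det_pos.ne' h.symm
  have hTST : T * S * T = 1 := by
    have hS' : S = T⁻¹ * T⁻¹ := by
      rw [← Matrix.mul_inv_rev, hT, Matrix.nonsing_inv_nonsing_inv _ hSdet]
    rw [hS', ← mul_assoc, Matrix.mul_nonsing_inv _ hTdet, one_mul,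
      Matrix.nonsing_inv_mul _ hTdet]
  have key : (1 : Matrix (Fin m) (Fin m) ℝ) - S⁻¹ = T * (S - 1) * T := by
    rw [Matrix.mul_sub, mul_one, Matrix.sub_mul, hTST, hT]
  rw [key]
  exact sandwich_psd h1 hS.inv.posSemidef.posSemidef_sqrt.isHermitian

/-- For symmetric positive semidefinite `C ⪯ D` (Löwner order),
`0 ≤ log det(I + D) − log det(I + C) ≤ log det(I + D − C)`. -/
theorem logdet_monotone_loewner (n : ℕ) (C D : Matrix (Fin n) (Fin n) ℝ)
    (hC : C.PosSemidef) (hD : D.PosSemidef) (hCD : (D - C).PosSemidef) :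
    0 ≤ Real.log ((1 + D).det) - Real.log ((1 + C).det) ∧
      Real.log ((1 + D).det) - Real.log ((1 + C).det) ≤ Real.log ((1 + (D - C)).det) := by
  set S : Matrix (Fin n) (Fin n) ℝ := 1 + C with hSdef
  set E : Matrix (Fin n) (Fin n) ℝ := D - C with hEdef
  have hSpd : S.PosDef := Matrix.PosDef.one.add_posSemidef hC
  have hEpd : (1 + E).PosDef := Matrix.PosDef.one.add_posSemidef hCD
  have hDpd : (1 + D).PosDef := Matrix.PosDef.one.add_posSemidef hD
  set R : Matrix (Fin n) (Fin n) ℝ := hCD.sqrt * S⁻¹ * hCD.sqrt with hRdef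
  have hRpsd : R.PosSemidef := sandwich_psd hSpd.inv.posSemidef hCD.posSemidef_sqrt.isHermitian
  have hDSE : (1 : Matrix (Fin n) (Fin n) ℝ) + D = S + E := by
    rw [hSdef, hEdef]; abel
  have hdet : (1 + D).det = S.det * (1 + R).det := by
    rw [hDSE, det_add_eq hSpd hCD]
  -- E - R is PSD
  have hER : (E - R).PosSemidef := by
    have h1 : ((1 : Matrix (Fin n) (Fin n) ℝ) - S⁻¹).PosSemidef := by
      refine one_sub_inv_psd hSpd ?_
      have : S - 1 = C := by rw [hSdef]; abel
      rwa [this]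
    have h2 := sandwich_psd h1 hCD.posSemidef_sqrt.isHermitian
    have h3 : hCD.sqrt * (1 - S⁻¹) * hCD.sqrt = E - R := by
      rw [Matrix.mul_sub, mul_one, Matrix.sub_mul, hCD.sqrt_mul_self, hRdef]
    rwa [h3] at h2
  -- det (1 + R) ≤ det (1 + E)
  have hRE : (1 + R).det ≤ (1 + E).det := by
    have hRpd : (1 + R).PosDef := Matrix.PosDef.one.add_posSemidef hRpsd
    have h1 : (1 : Matrix (Fin n) (Fin n) ℝ) + E = (1 + R) + (E - R) := by abel
    rw [h1, det_add_eq hRpd hER]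
    nlinarith [one_le_det_one_add (sandwich_psd hRpd.inv.posSemidef hER.posSemidef_sqrt.isHermitian),
      hRpd.det_pos]
  have hCle : (1 + C).det ≤ (1 + D).det := by
    rw [hdet]
    nlinarith [one_le_det_one_add hRpsd, hSpd.det_pos]
  constructor
  · have := Real.log_le_log hSpd.det_pos hCle
    linarith
  · rw [sub_le_iff_le_add]
    have h1 : (1 + D).det ≤ (1 + E).det * (1 + C).det := by
      rw [hdet]
      nlinarith [hRE, hSpd.det_pos, (Matrix.PosDef.one.add_posSemidef hRpsd).det_pos]
    have := Real.log_le_log hDpd.det_pos h1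
    rwa [Real.log_mul hEpd.det_pos.ne' hSpd.det_pos.ne'] at this
end

section
/- Let A ∈ ℝ^{n×m} with rank(A) ≥ k, and let Ω ∈ ℝ^{d×n} be such that Ω U_k has full column rank k, where U_k are the top-k left singular vectors of A. Then for Y = ΩA and 1 ≤ j ≤ k: σ_j(Y) ≥ σ_j(A)/‖(Ω U_k)†‖₂; in particular Y has rank at least k. -/
open Matrix

/-- The `j`-th largest singular value (0-indexed) of a real `m × n` matrix `A`,
defined as the square root of the `j`-th largest eigenvalue of `Aᴴ A`
(and `0` for out-of-range indices). -/
noncomputable def singularValue {m n : ℕ} (A : Matrix (Fin m) (Fin n) ℝ) (j : ℕ) : ℝ :=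
  if h : j < n then
    Real.sqrt
      (((Matrix.isHermitian_conjTranspose_mul_self A).eigenvalues ∘
          Tuple.sort (Matrix.isHermitian_conjTranspose_mul_self A).eigenvalues)
        (Fin.rev ⟨j, h⟩))
  else 0

namespace SketchAux

variable {m : ℕ}

lemma sum_dotProduct' {ι : Type*} (s : Finset ι) (f : ι → (Fin m → ℝ)) (w : Fin m → ℝ) :
    (∑ i ∈ s, f i) ⬝ᵥ w = ∑ i ∈ s, f i ⬝ᵥ w := by
  simp only [dotProduct, Finset.sum_apply, Finset.sum_mul]
  rw [Finset.sum_comm]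

lemma dotProduct_sum' {ι : Type*} (s : Finset ι) (w : Fin m → ℝ) (f : ι → (Fin m → ℝ)) :
    w ⬝ᵥ (∑ i ∈ s, f i) = ∑ i ∈ s, w ⬝ᵥ f i := by
  simp only [dotProduct, Finset.sum_apply, Finset.mul_sum]
  rw [Finset.sum_comm]

lemma dot_linearIndependent {ι : Type*} [Fintype ι] [DecidableEq ι] (w : ι → (Fin m → ℝ))
    (hw : ∀ i i', w i ⬝ᵥ w i' = if i = i' then 1 else 0) : LinearIndependent ℝ w := by
  rw [Fintype.linearIndependent_iff]
  intro g hg i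
  have h := congrArg (fun z => z ⬝ᵥ w i) hg
  simpa [sum_dotProduct', smul_dotProduct, hw, Finset.sum_ite_eq'] using h

lemma dot_expand {ι : Type*} [Fintype ι] [DecidableEq ι] (w : ι → (Fin m → ℝ))
    (hw : ∀ i i', w i ⬝ᵥ w i' = if i = i' then 1 else 0) (r q : ι → ℝ) :
    (∑ i, r i • w i) ⬝ᵥ (∑ i, q i • w i) = ∑ i, r i * q i := by
  rw [sum_dotProduct']
  refine Finset.sum_congr rfl fun i _ => ?_
  rw [smul_dotProduct, dotProduct_sum']
  simp [dotProduct_smul, hw, Finset.sum_ite_eq', mul_comm]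

lemma real_conjT {a b : ℕ} (W : Matrix (Fin a) (Fin b) ℝ) : Wᴴ = Wᵀ := by
  ext i j; simp [Matrix.conjTranspose_apply]

lemma dot_conjT {a b : ℕ} (B : Matrix (Fin a) (Fin b) ℝ) (x : Fin b → ℝ) :
    x ⬝ᵥ ((Bᴴ * B) *ᵥ x) = (B *ᵥ x) ⬝ᵥ (B *ᵥ x) := by
  rw [← Matrix.mulVec_mulVec, Matrix.dotProduct_mulVec, real_conjT, Matrix.vecMul_transpose]

/-- Spectral lower bound for a real symmetric matrix's quadratic form. -/
lemma quadform_lower {M : Matrix (Fin m) (Fin m) ℝ} (hM : M.IsHermitian)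
    (lo : ℝ) (hlo : ∀ i, lo ≤ hM.eigenvalues i) (z : Fin m → ℝ) :
    lo * (z ⬝ᵥ z) ≤ z ⬝ᵥ (M *ᵥ z) := by
  set W : Matrix (Fin m) (Fin m) ℝ := (hM.eigenvectorUnitary : Matrix (Fin m) (Fin m) ℝ) with hWdef
  have hstar : star W = Wᵀ := (Matrix.star_eq_conjTranspose W).trans (real_conjT W)
  have hW1 : W * Wᵀ = 1 := by
    rw [← hstar]; exact (Matrix.mem_unitaryGroup_iff).mp hM.eigenvectorUnitary.2
  set y : Fin m → ℝ := Wᵀ *ᵥ z with hy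
  have key : ∀ u : Fin m → ℝ, z ⬝ᵥ (W *ᵥ u) = y ⬝ᵥ u := by
    intro u
    rw [Matrix.dotProduct_mulVec, hy, Matrix.mulVec_transpose]
  have hof : (RCLike.ofReal ∘ hM.eigenvalues : Fin m → ℝ) = hM.eigenvalues := by
    funext i; simp
  have hMz : z ⬝ᵥ (M *ᵥ z) = y ⬝ᵥ (Matrix.diagonal hM.eigenvalues *ᵥ y) := by
    conv_lhs => rw [hM.spectral_theorem]
    rw [Unitary.conjStarAlgAut_apply, ← hWdef]
    rw [hstar, hof, ← Matrix.mulVec_mulVec, ← Matrix.mulVec_mulVec, key]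
  have hzz : z ⬝ᵥ z = y ⬝ᵥ y := by
    rw [← key y, hy, Matrix.mulVec_mulVec, hW1, Matrix.one_mulVec]
  rw [hMz, hzz]
  calc lo * (y ⬝ᵥ y) = ∑ i, lo * (y i * y i) := by rw [dotProduct, Finset.mul_sum]
    _ ≤ ∑ i, y i * (hM.eigenvalues i * y i) := by
        refine Finset.sum_le_sum fun i _ => ?_
        nlinarith [hlo i, mul_self_nonneg (y i)]
    _ = y ⬝ᵥ (Matrix.diagonal hM.eigenvalues *ᵥ y) := by
        simp [dotProduct, Matrix.mulVec_diagonal]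

/-- Courant–Fischer, upper direction. -/
lemma le_sorted_eig {M : Matrix (Fin m) (Fin m) ℝ} (hM : M.IsHermitian)
    {j : ℕ} (hj : j < m) (v : Fin (j+1) → (Fin m → ℝ))
    (hv : ∀ i i', v i ⬝ᵥ v i' = if i = i' then 1 else 0)
    {c : ℝ} (hc : ∀ x ∈ Submodule.span ℝ (Set.range v), c * (x ⬝ᵥ x) ≤ x ⬝ᵥ (M *ᵥ x)) :
    c ≤ (hM.eigenvalues ∘ Tuple.sort hM.eigenvalues) (Fin.rev ⟨j, hj⟩) := by
  set τ := Tuple.sort hM.eigenvalues with hτ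
  have hgmono : Monotone (hM.eigenvalues ∘ τ) := Tuple.monotone_sort _
  set W : Matrix (Fin m) (Fin m) ℝ := (hM.eigenvectorUnitary : Matrix (Fin m) (Fin m) ℝ)
    with hW
  have hWstar : star W * W = 1 := (Matrix.mem_unitaryGroup_iff').mp hM.eigenvectorUnitary.2
  set w : Fin m → (Fin m → ℝ) := fun p => W *ᵥ Pi.single p 1 with hwdef
  have hMw : ∀ p, M *ᵥ w p = hM.eigenvalues p • w p := by
    intro p
    show M *ᵥ (W *ᵥ Pi.single p 1) = _
    rw [hW, hM.eigenvectorUnitary_mulVec, hM.mulVec_eigenvectorBasis,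
      ← hM.eigenvectorUnitary_mulVec]
  have hwdot : ∀ p q, w p ⬝ᵥ w q = if p = q then 1 else 0 := by
    intro p q
    rw [hwdef]
    show (W *ᵥ Pi.single p 1) ⬝ᵥ (W *ᵥ Pi.single q 1) = _
    rw [Matrix.dotProduct_mulVec, ← Matrix.mulVec_transpose, Matrix.mulVec_mulVec]
    have : Wᵀ = star W := by
      rw [Matrix.star_eq_conjTranspose]; ext i j; simp [Matrix.conjTranspose_apply]
    rw [this, hWstar, Matrix.one_mulVec, single_dotProduct]
    simp [Pi.single_apply, eq_comm]
  have hmj : m - j ≤ m := Nat.sub_le m j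
  set ub : Fin (m - j) → (Fin m → ℝ) := fun i => w (τ (Fin.castLE hmj i)) with hub
  have hubdot : ∀ i i', ub i ⬝ᵥ ub i' = if i = i' then 1 else 0 := by
    intro i i'
    rw [hub]
    show w _ ⬝ᵥ w _ = _
    rw [hwdot]
    congr 1
    simp only [eq_iff_iff]
    constructor
    · intro h; exact Fin.castLE_injective hmj (τ.injective h)
    · intro h; rw [h]
  set S := Submodule.span ℝ (Set.range v) with hS
  set T := Submodule.span ℝ (Set.range ub) with hT
  have hSrank : Module.finrank ℝ S = j + 1 := by
    rw [hS, finrank_span_eq_card (dot_linearIndependent v hv)]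
    simp
  have hTrank : Module.finrank ℝ T = m - j := by
    rw [hT, finrank_span_eq_card (dot_linearIndependent ub hubdot)]
    simp
  have htotal : Module.finrank ℝ (Fin m → ℝ) = m := by
    simp [Module.finrank_fin_fun]
  have hsum := Submodule.finrank_sup_add_finrank_inf_eq S T
  have hle : Module.finrank ℝ ↥(S ⊔ T) ≤ m :=
    le_trans (Submodule.finrank_le (S ⊔ T)) (le_of_eq htotal)
  have hpos : 0 < Module.finrank ℝ ↥(S ⊓ T) := by omega
  have hbot : S ⊓ T ≠ ⊥ := by
    intro h
    rw [h, finrank_bot] at hpos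
    exact lt_irrefl 0 hpos
  obtain ⟨x, hxST, hx0⟩ := Submodule.exists_mem_ne_zero_of_ne_bot hbot
  obtain ⟨r, hr⟩ := (Submodule.mem_span_range_iff_exists_fun ℝ).mp ((Submodule.mem_inf.mp hxST).2)
  have hq : x ⬝ᵥ (M *ᵥ x) = ∑ i, (hM.eigenvalues ∘ τ) (Fin.castLE hmj i) * (r i * r i) := by
    conv_lhs => rw [← hr]
    have hMx : M *ᵥ (∑ i, r i • ub i)
        = ∑ i, ((hM.eigenvalues ∘ τ) (Fin.castLE hmj i) * r i) • ub i := by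
      show M.mulVecLin _ = _
      rw [map_sum]
      refine Finset.sum_congr rfl fun i _ => ?_
      rw [_root_.map_smul, Matrix.mulVecLin_apply, hub]
      show r i • (M *ᵥ w _) = _
      rw [hMw]
      ext t
      simp [Function.comp]
      ring
    rw [hMx, dot_expand ub hubdot]
    refine Finset.sum_congr rfl fun i _ => ?_
    ring
  have hxx : x ⬝ᵥ x = ∑ i, r i * r i := by
    conv_lhs => rw [← hr]
    exact dot_expand ub hubdot r r
  have hxxpos : 0 < x ⬝ᵥ x := by
    have hnn : 0 ≤ x ⬝ᵥ x := Finset.sum_nonneg fun i _ => mul_self_nonneg (x i)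
    rcases lt_or_eq_of_le hnn with h | h
    · exact h
    · exact absurd (dotProduct_self_eq_zero.mp h.symm) hx0
  have hup : x ⬝ᵥ (M *ᵥ x) ≤ ((hM.eigenvalues ∘ τ) (Fin.rev ⟨j, hj⟩)) * (x ⬝ᵥ x) := by
    rw [hq, hxx, Finset.mul_sum]
    refine Finset.sum_le_sum fun i _ => ?_
    have hle2 : (Fin.castLE hmj i : Fin m) ≤ Fin.rev ⟨j, hj⟩ := by
      have := i.isLt
      simp only [Fin.le_def, Fin.coe_castLE, Fin.val_rev]
      omega
    exact mul_le_mul_of_nonneg_right (hgmono hle2) (mul_self_nonneg _)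
  have hdown := hc x (Submodule.mem_inf.mp hxST).1
  exact le_of_mul_le_mul_right (hdown.trans hup) hxxpos

lemma sv_nonneg {a b : ℕ} (B : Matrix (Fin a) (Fin b) ℝ) (p : ℕ) : 0 ≤ singularValue B p := by
  unfold singularValue
  split
  · exact Real.sqrt_nonneg _
  · exact le_refl 0

end SketchAux

set_option maxHeartbeats 1000000 in
/-- Sketching preserves leading singular values: let `A = U Σ Vᵀ` be an SVD of
`A ∈ ℝ^{n×m}` with `rank A ≥ k`, let `Uₖ` be the top-`k` left singular vectors, and let
`Ω ∈ ℝ^{d×n}` be such that `Ω Uₖ` has full column rank `k`. Then for `Y = Ω A` and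
`0 ≤ j < k`: `σ_j(Y) ≥ σ_j(A)/‖(Ω Uₖ)†‖₂`, where for a full column rank matrix
`‖(Ω Uₖ)†‖₂ = σ_{k-1}(Ω Uₖ)⁻¹` (the reciprocal of the smallest singular value);
in particular `Y` has rank at least `k`. -/
theorem sketch_singular_value_lower_bound (n m d k : ℕ) (hk : k ≤ n)
    (A : Matrix (Fin n) (Fin m) ℝ) (hrank : k ≤ A.rank)
    (U : Matrix (Fin n) (Fin n) ℝ) (V : Matrix (Fin m) (Fin m) ℝ)
    (hU : Uᵀ * U = 1) (hV : Vᵀ * V = 1)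
    (hSVD : A = U * (Matrix.of fun (i : Fin n) (j : Fin m) =>
      if (i : ℕ) = (j : ℕ) then singularValue A (i : ℕ) else 0) * Vᵀ)
    (Om : Matrix (Fin d) (Fin n) ℝ)
    (Uk : Matrix (Fin n) (Fin k) ℝ) (hUk : Uk = U.submatrix id (Fin.castLE hk))
    (hfull : (Om * Uk).rank = k) :
    (∀ j, j < k →
        singularValue A j / (singularValue (Om * Uk) (k - 1))⁻¹
          ≤ singularValue (Om * A) j) ∧
      k ≤ (Om * A).rank := by
  classical
  rcases Nat.eq_zero_or_pos k with rfl | hk0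
  · exact ⟨fun j hj => absurd hj (Nat.not_lt_zero j), Nat.zero_le _⟩
  set Sg : Matrix (Fin n) (Fin m) ℝ := Matrix.of fun (i : Fin n) (j : Fin m) =>
      if (i : ℕ) = (j : ℕ) then singularValue A (i : ℕ) else 0 with hSg
  have hSVD' : A = U * Sg * Vᵀ := hSVD
  have hkm : k ≤ m := le_trans hrank (le_trans (Matrix.rank_le_card_width A) (by simp))
  -- positivity of the top-k singular values of A
  have hA2 := Matrix.isHermitian_conjTranspose_mul_self A
  have hsv_pos : ∀ i : ℕ, i < k → 0 < singularValue A i := by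
    intro i hik
    have him : i < m := lt_of_lt_of_le hik hkm
    rw [singularValue, dif_pos him]
    apply Real.sqrt_pos.mpr
    by_contra hle
    push_neg at hle
    set τ := Tuple.sort hA2.eigenvalues with hτ
    have hzero : ∀ t : Fin m, (t : ℕ) + i + 1 ≤ m → hA2.eigenvalues (τ t) = 0 := by
      intro t ht
      have h1 : (hA2.eigenvalues ∘ τ) t ≤ (hA2.eigenvalues ∘ τ) (Fin.rev ⟨i, him⟩) := by
        apply Tuple.monotone_sort
        simp only [Fin.le_def, Fin.val_rev]
        omega
      have h2 : 0 ≤ hA2.eigenvalues (τ t) :=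
        Matrix.eigenvalues_conjTranspose_mul_self_nonneg A (τ t)
      have := le_trans h1 hle
      simp only [Function.comp] at this h1
      linarith
    have hrank2 : A.rank = Fintype.card {t // hA2.eigenvalues t ≠ 0} := by
      rw [← Matrix.rank_conjTranspose_mul_self A]
      exact hA2.rank_eq_card_non_zero_eigs
    have hinj : ∃ f : {t // hA2.eigenvalues t ≠ 0} → Fin i, Function.Injective f := by
      have hval : ∀ t : {t // hA2.eigenvalues t ≠ 0}, m - i ≤ (τ.symm t.1 : ℕ) := by
        intro t
        by_contra hlt
        push_neg at hlt
        have := hzero (τ.symm t.1) (by omega)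
        rw [Equiv.apply_symm_apply] at this
        exact t.2 this
      refine ⟨fun t => ⟨(τ.symm t.1 : ℕ) - (m - i), ?_⟩, ?_⟩
      · have h3 := (τ.symm t.1).isLt
        have h4 := hval t
        omega
      · intro t t' htt
        have h3 := hval t
        have h4 := hval t'
        have h5 : (τ.symm t.1 : ℕ) - (m - i) = (τ.symm t'.1 : ℕ) - (m - i) :=
          congrArg Fin.val htt
        have h6 : τ.symm t.1 = τ.symm t'.1 := by
          apply Fin.ext
          omega
        exact Subtype.ext (τ.symm.injective h6)
    obtain ⟨f, hf⟩ := hinj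
    have := Fintype.card_le_of_injective f hf
    rw [Fintype.card_fin] at this
    omega
  -- the matrix identity (Om * A) * (V * E) = (Om * Uk) * Dk
  set E : Matrix (Fin m) (Fin k) ℝ :=
    Matrix.of fun (q : Fin m) (t : Fin k) => if (q : ℕ) = (t : ℕ) then (1:ℝ) else 0 with hE
  set Dk : Matrix (Fin k) (Fin k) ℝ :=
    Matrix.diagonal (fun t : Fin k => singularValue A t) with hDk
  have hAV : A * V = U * Sg := by
    rw [hSVD', Matrix.mul_assoc (U * Sg) Vᵀ V, hV, Matrix.mul_one]
  have hUSgE : U * (Sg * E) = Uk * Dk := by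
    have hSgE : Sg * E = Matrix.of fun (q : Fin n) (t : Fin k) =>
        if (q : ℕ) = (t : ℕ) then singularValue A (t : ℕ) else 0 := by
      ext q t
      rw [Matrix.mul_apply]
      rw [Finset.sum_eq_single (Fin.castLE hkm t)]
      · simp only [hSg, hE, Matrix.of_apply, Fin.coe_castLE]
        by_cases h : (q : ℕ) = (t : ℕ)
        · simp [h]
        · simp [h]
      · intro b _ hb
        simp only [hSg, hE, Matrix.of_apply, Fin.coe_castLE]
        have : (b : ℕ) ≠ (t : ℕ) := fun hbt => hb (Fin.ext (by simp [hbt]))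
        simp [this]
      · intro hmem
        exact absurd (Finset.mem_univ _) hmem
    rw [hSgE]
    ext r t
    rw [Matrix.mul_apply, Matrix.mul_diagonal]
    rw [Finset.sum_eq_single (Fin.castLE hk t)]
    · simp only [Matrix.of_apply, Fin.coe_castLE, if_pos rfl]
      rw [hUk]
      simp [Matrix.submatrix_apply]
    · intro b _ hb
      simp only [Matrix.of_apply]
      have : (b : ℕ) ≠ (t : ℕ) := fun hbt => hb (Fin.ext (by simp [hbt]))
      simp [this]
    · intro hmem
      exact absurd (Finset.mem_univ _) hmem
  have hId : (Om * A) * (V * E) = (Om * Uk) * Dk := by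
    calc (Om * A) * (V * E) = Om * (A * V) * E := by
          rw [Matrix.mul_assoc Om A (V * E), ← Matrix.mul_assoc A V E, Matrix.mul_assoc Om (A*V) E]
      _ = Om * (U * (Sg * E)) := by rw [hAV, Matrix.mul_assoc Om (U * Sg) E,
          Matrix.mul_assoc U Sg E]
      _ = Om * (Uk * Dk) := by rw [hUSgE]
      _ = (Om * Uk) * Dk := by rw [Matrix.mul_assoc]
  have hDkdet : IsUnit Dk.det := by
    rw [hDk, Matrix.det_diagonal]
    exact (Finset.prod_ne_zero_iff.mpr fun t _ => ne_of_gt (hsv_pos t.val t.isLt)).isUnit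
  have hrankY : k ≤ (Om * A).rank := by
    have h1 : ((Om * A) * (V * E)).rank ≤ (Om * A).rank := Matrix.rank_mul_le_left _ _
    rw [hId, Matrix.rank_mul_eq_left_of_isUnit_det Dk (Om * Uk) hDkdet, hfull] at h1
    exact h1
  refine ⟨?_, hrankY⟩
  -- the singular value inequality
  intro j hjk
  have hjm : j < m := lt_of_lt_of_le hjk hkm
  have hjm1 : j + 1 ≤ m := hjm
  have hjk1 : j + 1 ≤ k := hjk
  have hjn1 : j + 1 ≤ n := le_trans hjk1 hk
  set X : Matrix (Fin d) (Fin k) ℝ := Om * Uk with hX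
  have hNX := Matrix.isHermitian_conjTranspose_mul_self X
  set τX := Tuple.sort hNX.eigenvalues with hτX
  have hk1 : k - 1 < k := by omega
  set lo : ℝ := (hNX.eigenvalues ∘ τX) (Fin.rev ⟨k - 1, hk1⟩) with hlo
  have hlo_nonneg : 0 ≤ lo :=
    Matrix.eigenvalues_conjTranspose_mul_self_nonneg X _
  set s : ℝ := singularValue X (k - 1) with hs
  have hs_def : s = Real.sqrt lo := by
    rw [hs, singularValue, dif_pos hk1]
  have hs_sq : s ^ 2 = lo := by
    rw [hs_def, Real.sq_sqrt hlo_nonneg]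
  have hs_nonneg : 0 ≤ s := by rw [hs_def]; exact Real.sqrt_nonneg _
  have hlo_all : ∀ i, lo ≤ hNX.eigenvalues i := by
    intro i
    have : hNX.eigenvalues i = (hNX.eigenvalues ∘ τX) (τX.symm i) := by
      simp [Function.comp]
    rw [this, hlo]
    apply Tuple.monotone_sort
    simp only [Fin.le_def, Fin.val_rev]
    omega
  clear_value lo s
  -- the orthonormal family of columns of V
  set v : Fin (j+1) → (Fin m → ℝ) := fun i => fun rr => V rr (Fin.castLE hjm1 i) with hv
  have hvdot : ∀ i i', v i ⬝ᵥ v i' = if i = i' then 1 else 0 := by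
    intro i i'
    have h1 : v i ⬝ᵥ v i' = (Vᵀ * V) (Fin.castLE hjm1 i) (Fin.castLE hjm1 i') := by
      rw [Matrix.mul_apply]
      simp [hv, dotProduct, Matrix.transpose_apply]
    rw [h1, hV, Matrix.one_apply]
    by_cases h : i = i'
    · simp [h]
    · have : Fin.castLE hjm1 i ≠ Fin.castLE hjm1 i' := fun hc => h (Fin.castLE_injective _ hc)
      simp [h, this]
  -- per-column action of Om * A
  have hcol : ∀ i : Fin (j+1), (Om * A) *ᵥ v i
      = singularValue A (i : ℕ) • (X *ᵥ (Pi.single (Fin.castLE hjk1 i) 1 : Fin k → ℝ)) := by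
    intro i
    have hVv : Vᵀ *ᵥ v i = (Pi.single (Fin.castLE hjm1 i) 1 : Fin m → ℝ) := by
      ext q
      rw [Matrix.mulVec, dotProduct]
      have : ∑ r, Vᵀ q r * v i r = (Vᵀ * V) q (Fin.castLE hjm1 i) := by
        rw [Matrix.mul_apply]
      rw [this, hV, Matrix.one_apply, Pi.single_apply, eq_comm]
    have hSgs : Sg *ᵥ (Pi.single (Fin.castLE hjm1 i) 1 : Fin m → ℝ)
        = singularValue A (i : ℕ) • (Pi.single (Fin.castLE hjn1 i) 1 : Fin n → ℝ) := by
      ext t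
      rw [Matrix.mulVec_single_one, Matrix.col_apply]
      simp only [hSg, Matrix.of_apply, Fin.coe_castLE, mul_one, Pi.smul_apply,
        Pi.single_apply, smul_eq_mul]
      by_cases h : (t : ℕ) = (i : ℕ)
      · rw [if_pos h, if_pos (Fin.ext (by simp [h]) : t = Fin.castLE hjn1 i), h, mul_one]
      · rw [if_neg h, if_neg (fun hc => h (by rw [hc]; simp)), mul_zero]
    have hUs : U *ᵥ (singularValue A (i : ℕ) • (Pi.single (Fin.castLE hjn1 i) 1 : Fin n → ℝ))
        = singularValue A (i : ℕ) • (Uk *ᵥ (Pi.single (Fin.castLE hjk1 i) 1 : Fin k → ℝ)) := by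
      rw [Matrix.mulVec_smul]
      congr 1
      rw [Matrix.mulVec_single_one, Matrix.mulVec_single_one]
      ext rr
      rw [hUk, Matrix.col_apply, Matrix.col_apply]
      simp only [Matrix.submatrix_apply, id_eq, mul_one]
      congr 1
    have hAv : A *ᵥ v i
        = singularValue A (i : ℕ) • (Uk *ᵥ (Pi.single (Fin.castLE hjk1 i) 1 : Fin k → ℝ)) := by
      conv_lhs => rw [hSVD']
      rw [← Matrix.mulVec_mulVec, ← Matrix.mulVec_mulVec, hVv, hSgs, hUs]
    calc (Om * A) *ᵥ v i = Om *ᵥ (A *ᵥ v i) := (Matrix.mulVec_mulVec _ _ _).symm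
      _ = singularValue A (i : ℕ) • (Om *ᵥ (Uk *ᵥ (Pi.single (Fin.castLE hjk1 i) 1 : Fin k → ℝ))) := by
          rw [hAv, Matrix.mulVec_smul]
      _ = singularValue A (i : ℕ) • (X *ᵥ (Pi.single (Fin.castLE hjk1 i) 1 : Fin k → ℝ)) := by
          rw [Matrix.mulVec_mulVec]
  -- the quadratic form bound on the span
  have hNY := Matrix.isHermitian_conjTranspose_mul_self (Om * A)
  have hkey : ∀ x ∈ Submodule.span ℝ (Set.range v),
      (s ^ 2 * singularValue A j ^ 2) * (x ⬝ᵥ x) ≤ x ⬝ᵥ (((Om * A)ᴴ * (Om * A)) *ᵥ x) := by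
    intro x hx
    obtain ⟨r, hr⟩ := (Submodule.mem_span_range_iff_exists_fun ℝ).mp hx
    set sing : Fin (j+1) → (Fin k → ℝ) :=
      fun i => (Pi.single (Fin.castLE hjk1 i) 1 : Fin k → ℝ) with hsing
    set z : Fin k → ℝ := ∑ i, (r i * singularValue A (i : ℕ)) • sing i with hz
    have hsingles : ∀ i i' : Fin (j+1),
        sing i ⬝ᵥ sing i' = if i = i' then 1 else 0 := by
      intro i i'
      rw [hsing]
      simp only []
      rw [single_dotProduct, Pi.single_apply]
      by_cases h : i = i'
      · simp [h]
      · have : Fin.castLE hjk1 i' ≠ Fin.castLE hjk1 i := fun hc =>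
          h (Fin.castLE_injective _ hc).symm
        simp [h, this]
    have hBx : (Om * A) *ᵥ x = X *ᵥ z := by
      conv_lhs => rw [← hr]
      have h1 : (Om * A) *ᵥ (∑ i, r i • v i) = ∑ i, r i • ((Om * A) *ᵥ v i) := by
        show (Om * A).mulVecLin _ = _
        rw [map_sum]
        exact Finset.sum_congr rfl fun i _ => by rw [_root_.map_smul, Matrix.mulVecLin_apply]
      have h2 : X *ᵥ z = ∑ i, (r i * singularValue A (i : ℕ)) • (X *ᵥ sing i) := by
        rw [hz]
        show X.mulVecLin _ = _
        rw [map_sum]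
        exact Finset.sum_congr rfl fun i _ => by rw [_root_.map_smul, Matrix.mulVecLin_apply]
      rw [h1, h2]
      refine Finset.sum_congr rfl fun i _ => ?_
      rw [hcol i, smul_smul]
    have hquad : x ⬝ᵥ (((Om * A)ᴴ * (Om * A)) *ᵥ x) = z ⬝ᵥ ((Xᴴ * X) *ᵥ z) := by
      rw [SketchAux.dot_conjT, SketchAux.dot_conjT, hBx]
    have hzz : z ⬝ᵥ z = ∑ i, (r i * singularValue A (i : ℕ)) * (r i * singularValue A (i : ℕ)) := by
      rw [hz]
      exact SketchAux.dot_expand sing hsingles _ _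
    have hxx : x ⬝ᵥ x = ∑ i, r i * r i := by
      conv_lhs => rw [← hr]
      exact SketchAux.dot_expand v hvdot r r
    have hlow := SketchAux.quadform_lower hNX lo hlo_all z
    have hmono : ∀ i : Fin (j+1), singularValue A j ≤ singularValue A (i : ℕ) := by
      intro i
      have hi : (i : ℕ) < m := lt_of_lt_of_le i.isLt hjm1
      rw [singularValue, singularValue, dif_pos hjm, dif_pos hi]
      apply Real.sqrt_le_sqrt
      apply Tuple.monotone_sort
      simp only [Fin.le_def, Fin.val_rev]
      have := i.isLt
      omega
    have hstep : (s ^ 2 * singularValue A j ^ 2) * (x ⬝ᵥ x) ≤ lo * (z ⬝ᵥ z) := by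
      rw [hxx, hzz, hs_sq, Finset.mul_sum, Finset.mul_sum]
      refine Finset.sum_le_sum fun i _ => ?_
      have h1 := hmono i
      have h2 := SketchAux.sv_nonneg A j
      have h3 := SketchAux.sv_nonneg A (i : ℕ)
      have h4 : singularValue A j * singularValue A j
          ≤ singularValue A (i : ℕ) * singularValue A (i : ℕ) := mul_le_mul h1 h1 h2 h3
      have h5 := mul_le_mul_of_nonneg_left h4 (mul_self_nonneg (r i))
      have h6 := mul_le_mul_of_nonneg_left h5 hlo_nonneg
      nlinarith [h6]
    rw [hquad]
    exact hstep.trans hlow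
  -- conclude via Courant–Fischer
  have hCF := SketchAux.le_sorted_eig hNY hjm v hvdot hkey
  have hYj : singularValue (Om * A) j
      = Real.sqrt ((hNY.eigenvalues ∘ Tuple.sort hNY.eigenvalues) (Fin.rev ⟨j, hjm⟩)) := by
    rw [singularValue, dif_pos hjm]
  have hfinal : s * singularValue A j ≤ singularValue (Om * A) j := by
    have h1 : s * singularValue A j
        = Real.sqrt (s ^ 2 * singularValue A j ^ 2) := by
      rw [← mul_pow, Real.sqrt_sq (mul_nonneg hs_nonneg (SketchAux.sv_nonneg A j))]
    rw [h1, hYj]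
    exact Real.sqrt_le_sqrt hCF
  rw [div_inv_eq_mul, mul_comm]
  exact hfinal
end
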